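/- Let n ≥ 1, let α, β ∈ ℝ, and let σ° : ℝⁿ → ℝ be positively one-homogeneous (σ°(λx) = λσ°(x) for all λ > 0 and x ∈ ℝⁿ), positive on ℝⁿ ∖ {0}, and differentiable at every x ≠ 0. Then the vector field F(x) := (α σ°(x)^{−n} + β) x is differentiable on ℝⁿ ∖ {0}, and its divergence, i.e. the trace of its Fréchet derivative, satisfies div F(x) = n β for every x ≠ 0. -/

import Mathlib

open MeasureTheory Filter
open scoped ENNReal NNReal RealInnerProductSpace

noncomputable section

/-- Euclidean space `ℝⁿ`. -/
abbrev Eucl (n : ℕ) := EuclideanSpace ℝ (Fin n)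

/-- Trace of a rank-one map `v ↦ (L v) • x` equals `L x`. -/
lemma trace_smulRight_aux {n : ℕ} (L : Eucl n →L[ℝ] ℝ) (x : Eucl n) :
    LinearMap.trace ℝ (Eucl n) ((L.smulRight x : Eucl n →L[ℝ] Eucl n) : Eucl n →ₗ[ℝ] Eucl n)
      = L x := by
  have h1 : ((L.smulRight x : Eucl n →L[ℝ] Eucl n) : Eucl n →ₗ[ℝ] Eucl n)
      = (LinearMap.toSpanSingleton ℝ (Eucl n) x).comp (L : Eucl n →ₗ[ℝ] ℝ) := by
    ext v; simp [LinearMap.toSpanSingleton_apply]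
  rw [h1, LinearMap.trace_comp_comm']
  have h2 : (L : Eucl n →ₗ[ℝ] ℝ).comp (LinearMap.toSpanSingleton ℝ (Eucl n) x)
      = (L x) • LinearMap.id := by
    ext
    simp [LinearMap.toSpanSingleton_apply, mul_comm]
  rw [h2, _root_.map_smul, LinearMap.trace_id]
  simp

/-- Euler's identity for positively one-homogeneous functions. -/
lemma euler_aux {n : ℕ} (σp : Eucl n → ℝ)
    (hhom : ∀ c : ℝ, 0 < c → ∀ x, σp (c • x) = c * σp x)
    (x : Eucl n) (hd : DifferentiableAt ℝ σp x) :
    fderiv ℝ σp x x = σp x := by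
  have hline : HasDerivAt (fun t : ℝ => t • x) x 1 := by
    simpa using (hasDerivAt_id (1 : ℝ)).smul_const x
  have h1 : HasDerivAt (fun t : ℝ => σp (t • x)) (fderiv ℝ σp x x) 1 := by
    have := HasFDerivAt.comp_hasDerivAt_of_eq 1 hd.hasFDerivAt hline (by simp)
    exact this
  have h2 : HasDerivAt (fun t : ℝ => t * σp x) (σp x) 1 := by
    simpa using (hasDerivAt_id (1 : ℝ)).mul_const (σp x)
  have heq : (fun t : ℝ => σp (t • x)) =ᶠ[nhds (1 : ℝ)] (fun t : ℝ => t * σp x) := by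
    filter_upwards [eventually_gt_nhds (by norm_num : (0:ℝ) < 1)] with t ht
    exact hhom t ht x
  exact (h1.congr_of_eventuallyEq heq.symm).unique h2

/-- Divergence of the interpolating Cahn–Hoffman field:
for positively one-homogeneous `σ°` positive and differentiable away from `0`,
`div ((α σ°(x)^{−n} + β) x) = n β` for `x ≠ 0`. -/
theorem div_interpolating_field {n : ℕ} (hn : 1 ≤ n) (α β : ℝ) (σp : Eucl n → ℝ)
    (hhom : ∀ c : ℝ, 0 < c → ∀ x, σp (c • x) = c * σp x)
    (hpos : ∀ x : Eucl n, x ≠ 0 → 0 < σp x)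
    (hdiff : ∀ x : Eucl n, x ≠ 0 → DifferentiableAt ℝ σp x) :
    ∀ x : Eucl n, x ≠ 0 →
      DifferentiableAt ℝ (fun y : Eucl n => (α * ((σp y) ^ n)⁻¹ + β) • y) x ∧
      LinearMap.trace ℝ (Eucl n)
          (fderiv ℝ (fun y : Eucl n => (α * ((σp y) ^ n)⁻¹ + β) • y) x :
            Eucl n →ₗ[ℝ] Eucl n)
        = n * β := by
  intro x hx
  set s := σp x with hs
  have hσpos : 0 < s := hpos x hx
  have hσne : s ≠ 0 := hσpos.ne'
  have hpowne : s ^ n ≠ 0 := pow_ne_zero _ hσne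
  set D := fderiv ℝ σp x with hD
  have hσ : HasFDerivAt σp D x := (hdiff x hx).hasFDerivAt
  -- scalar part
  set c : ℝ := α * (-(↑n * s ^ (n - 1)) / (s ^ n) ^ 2) with hc
  have hscal : HasDerivAt (fun t : ℝ => α * (t ^ n)⁻¹ + β) c s := by
    have h1 : HasDerivAt (fun t : ℝ => t ^ n) ((n : ℝ) * s ^ (n - 1)) s := hasDerivAt_pow n s
    have h2 := h1.inv hpowne
    simpa [hc] using (h2.const_mul α).add_const β
  have hg : HasFDerivAt (fun y : Eucl n => α * ((σp y) ^ n)⁻¹ + β) (c • D) x := by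
    have := HasDerivAt.comp_hasFDerivAt_of_eq x hscal hσ rfl
    exact this
  have hF : HasFDerivAt (fun y : Eucl n => (α * ((σp y) ^ n)⁻¹ + β) • y)
      ((α * (s ^ n)⁻¹ + β) • ContinuousLinearMap.id ℝ (Eucl n) +
        (c • D).smulRight x) x := by
    exact hg.smul (hasFDerivAt_id x)
  refine ⟨hF.differentiableAt, ?_⟩
  rw [hF.fderiv]
  have heuler : D x = s := euler_aux σp hhom x (hdiff x hx)
  have htr : LinearMap.trace ℝ (Eucl n)
      (((c • D).smulRight x : Eucl n →L[ℝ] Eucl n) : Eucl n →ₗ[ℝ] Eucl n) = c * s := by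
    rw [trace_smulRight_aux]
    simp [heuler]
  have hfr : (Module.finrank ℝ (Eucl n) : ℝ) = n := by
    simp [finrank_euclideanSpace]
  rw [ContinuousLinearMap.coe_add, map_add, htr,
    ContinuousLinearMap.coe_smul, _root_.map_smul,
    ContinuousLinearMap.coe_id, LinearMap.trace_id, smul_eq_mul, hfr]
  have hkey : s ^ (n - 1) * s = s ^ n := by
    rw [← pow_succ]; congr 1; omega
  rw [hc]
  field_simp
  ring_nf
  have e1 : s ^ (n*2) = s ^ n * s ^ n := by rw [pow_mul, sq]
  linear_combination (-α) * hkey
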